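/- Let q > 2 be a prime power and r ≥ 2 an integer. If (q,r) ≠ (3,2), then the weight set of the q-ary Hamming code H_r(q) equals {0} ∪ {3, 4, …, θ_q(r−1)}, where θ_q(r−1) = (q^r − 1)/(q − 1); in the exceptional case q = 3, r = 2, the weight set of H_2(3) equals {0, 3}. -/

import Mathlib

/-- Hamming weight: the number of nonzero coordinates. -/
noncomputable def hwt {ι F : Type*} [Zero F] (c : ι → F) : ℕ := Set.ncard {i | c i ≠ 0}

/-- `P_r(q)`: the set of nonzero vectors of `F^r` whose first nonzero entry equals `1`,
a set of representatives of the projective space `PG(r-1, q)`. -/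
def ProjReps (F : Type*) [Zero F] [One F] (r : ℕ) : Set (Fin r → F) :=
  {u | ∃ i : Fin r, u i = 1 ∧ ∀ j : Fin r, j < i → u j = 0}

/-- The `q`-ary Hamming code `H_r(q)`: all vectors `c`, with coordinates indexed by
`P_r(q)`, such that `Σ_{u ∈ P_r(q)} c_u • u = 0` in `F^r`. -/
def HammingCode (F : Type*) [Field F] (r : ℕ) : Set (ProjReps F r → F) :=
  {c | ∑ᶠ u : ProjReps F r, c u • (u : Fin r → F) = 0}

open Finset
set_option linter.unusedSectionVars false
open scoped Classical

section Infra
variable {F : Type*} [Field F] [Fintype F]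

lemma projreps_ne_zero {r : ℕ} {u : Fin r → F} (hu : u ∈ ProjReps F r) : u ≠ 0 := by
  obtain ⟨i, h1, -⟩ := hu
  intro h
  rw [h] at h1
  simp at h1

lemma projreps_eq_of_smul {r : ℕ} {u v : Fin r → F} (hu : u ∈ ProjReps F r)
    (hv : v ∈ ProjReps F r) {a : F} (h : u = a • v) : u = v := by
  obtain ⟨i, hu1, hu2⟩ := hu
  obtain ⟨j, hv1, hv2⟩ := hv
  rcases lt_trichotomy i j with hij | rfl | hij
  · exfalso
    have := congrFun h i
    rw [hu1, Pi.smul_apply, hv2 i hij, smul_zero] at this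
    exact one_ne_zero this
  · have ha : a = 1 := by
      have := congrFun h i
      rw [hu1, Pi.smul_apply, hv1, smul_eq_mul, mul_one] at this
      exact this.symm
    rw [h, ha, one_smul]
  · exfalso
    have h0 := congrFun h j
    rw [hu2 j hij, Pi.smul_apply, hv1, smul_eq_mul, mul_one] at h0
    have := congrFun h i
    rw [hu1, Pi.smul_apply, ← h0, zero_smul] at this
    exact one_ne_zero this

/-- the distinguished last point `e`. -/
def eP (r : ℕ) : Fin (r+1) → F := Fin.snoc 0 1

lemma eP_mem (r : ℕ) : eP (F := F) r ∈ ProjReps F (r+1) := by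
  refine ⟨Fin.last r, by simp [eP], ?_⟩
  intro j hj
  obtain ⟨j', rfl⟩ := Fin.exists_castSucc_eq.mpr (ne_of_lt hj)
  simp [eP]

lemma snoc_mem {r : ℕ} {m : Fin r → F} (hm : m ∈ ProjReps F r) (t : F) :
    Fin.snoc m t ∈ ProjReps F (r+1) := by
  obtain ⟨i, h1, h2⟩ := hm
  refine ⟨i.castSucc, by simp [h1], ?_⟩
  intro j hj
  have hne : j ≠ Fin.last r := by
    intro h
    rw [h] at hj
    exact absurd (hj.trans (Fin.castSucc_lt_last i)) (lt_irrefl _)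
  obtain ⟨j', rfl⟩ := Fin.exists_castSucc_eq.mpr hne
  rw [Fin.snoc_castSucc]
  exact h2 j' (Fin.castSucc_lt_castSucc_iff.mp hj)

/-- last coordinate of an element of `ProjReps` all of whose earlier coordinates vanish. -/
lemma last_eq_one {r : ℕ} {u : Fin (r+1) → F} (hu : u ∈ ProjReps F (r+1))
    (h : ∀ j : Fin r, u j.castSucc = 0) : u = eP r := by
  obtain ⟨i, h1, h2⟩ := hu
  have hi : i = Fin.last r := by
    by_contra hne
    obtain ⟨i', rfl⟩ := Fin.exists_castSucc_eq.mpr hne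
    rw [h i'] at h1
    exact one_ne_zero h1.symm
  funext j
  rcases Fin.eq_castSucc_or_eq_last j with ⟨j', rfl⟩ | rfl
  · rw [h j']; simp [eP]
  · rw [← hi, h1]; simp [eP, hi]

noncomputable def equivP (r : ℕ) :
    ProjReps F (r+1) ≃ (ProjReps F r × F) ⊕ Unit where
  toFun u :=
    if h : ∀ j : Fin r, u.val j.castSucc = 0 then Sum.inr () else
      Sum.inl (⟨Fin.init u.val, by
        obtain ⟨i, h1, h2⟩ := u.2
        have hi : i ≠ Fin.last r := by
          rintro rfl
          exact h fun j => h2 _ (Fin.castSucc_lt_last j)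
        obtain ⟨i', rfl⟩ := Fin.exists_castSucc_eq.mpr hi
        exact ⟨i', by simpa [Fin.init] using h1, fun j hj => by
          simpa [Fin.init] using h2 j.castSucc (Fin.castSucc_lt_castSucc_iff.mpr hj)⟩⟩,
        u.val (Fin.last r))
  invFun x := Sum.elim (fun p => ⟨Fin.snoc p.1.val p.2, snoc_mem p.1.2 p.2⟩)
      (fun _ => ⟨eP r, eP_mem r⟩) x
  left_inv u := by
    dsimp only
    by_cases h : ∀ j : Fin r, u.val j.castSucc = 0
    · rw [dif_pos h]
      exact Subtype.ext (last_eq_one u.2 h).symm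
    · rw [dif_neg h]
      exact Subtype.ext (Fin.snoc_init_self u.val)
  right_inv x := by
    dsimp only
    rcases x with ⟨m, t⟩ | ⟨⟩
    · have h : ¬ ∀ j : Fin r, (Fin.snoc m.val t : Fin (r+1) → F) j.castSucc = 0 := by
        intro h
        obtain ⟨i, h1, -⟩ := m.2
        have := h i
        rw [Fin.snoc_castSucc] at this
        exact one_ne_zero (h1 ▸ this)
      simp only [Sum.elim_inl]
      refine (dif_neg h).trans ?_
      congr 1
      refine Prod.ext (Subtype.ext ?_) ?_
      · simp
      · simp
    · have h : ∀ j : Fin r, (eP (F := F) r) j.castSucc = 0 := by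
        intro j; simp [eP]
      simp only [Sum.elim_inr]
      exact dif_pos h
end Infra

section Infra2
variable {F : Type*} [Field F] [Fintype F]

noncomputable def sMT {r : ℕ} (m : ProjReps F r) (t : F) : ProjReps F (r+1) :=
  (equivP r).symm (Sum.inl (m, t))

noncomputable def sE (r : ℕ) : ProjReps F (r+1) := (equivP (F := F) r).symm (Sum.inr ())

lemma sMT_val {r : ℕ} (m : ProjReps F r) (t : F) :
    (sMT m t : Fin (r+1) → F) = Fin.snoc m.val t := rfl

lemma sE_val (r : ℕ) : (sE (F := F) r : Fin (r+1) → F) = eP r := rfl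

lemma sum_split {β : Type*} [AddCommMonoid β] (r : ℕ) (f : ProjReps F (r+1) → β) :
    ∑ u : ProjReps F (r+1), f u
      = (∑ m : ProjReps F r, ∑ t : F, f (sMT m t)) + f (sE r) := by
  rw [← Equiv.sum_comp (equivP r).symm f, Fintype.sum_sum_type, Fintype.sum_prod_type]
  simp [sMT, sE]

/-- support sizes and the two fundamental sums of a line pattern -/
noncomputable def sc (g : F → F) : ℕ := (univ.filter (fun t => g t ≠ 0)).card
noncomputable def sg (g : F → F) : F := ∑ t, g t
noncomputable def st (g : F → F) : F := ∑ t, g t * t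

lemma hwt_card {ι : Type*} [Fintype ι] (c : ι → F) :
    hwt c = (univ.filter (fun i => c i ≠ 0)).card := by
  rw [hwt, ← Set.ncard_coe_finset]
  congr 1
  ext i
  simp

lemma snoc_decomp {r : ℕ} (m : Fin r → F) (t : F) :
    (Fin.snoc m t : Fin (r+1) → F) = Fin.snoc m 0 + t • eP r := by
  funext j
  rcases Fin.eq_castSucc_or_eq_last j with ⟨j', rfl⟩ | rfl
  · simp [eP]
  · simp [eP]

/-- The master construction: from per-line patterns `g` and a coefficient `ce` on `e`. -/
noncomputable def mkc {r : ℕ} (g : ProjReps F r → F → F) (ce : F) :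
    ProjReps F (r+1) → F :=
  fun u => Sum.elim (fun p => g p.1 p.2) (fun _ => ce) (equivP r u)

lemma mkc_sMT {r : ℕ} (g : ProjReps F r → F → F) (ce : F) (m : ProjReps F r) (t : F) :
    mkc g ce (sMT m t) = g m t := by
  simp [mkc, sMT]

lemma mkc_sE {r : ℕ} (g : ProjReps F r → F → F) (ce : F) :
    mkc g ce (sE r) = ce := by
  simp [mkc, sE]

lemma core {r : ℕ} (g : ProjReps F r → F → F) (ce : F)
    (H1 : ∑ m : ProjReps F r, (sg (g m)) • (Fin.snoc m.val 0 : Fin (r+1) → F) = 0)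
    (H2 : (∑ m : ProjReps F r, st (g m)) + ce = 0) :
    mkc g ce ∈ HammingCode F (r+1) ∧
      hwt (mkc g ce) = (∑ m : ProjReps F r, sc (g m)) + (if ce ≠ 0 then 1 else 0) := by
  constructor
  · show ∑ᶠ u : ProjReps F (r+1), mkc g ce u • (u : Fin (r+1) → F) = 0
    rw [finsum_eq_sum_of_fintype, sum_split r (fun u => mkc g ce u • (u : Fin (r+1) → F))]
    have key : ∀ m : ProjReps F r, ∀ t : F,
        mkc g ce (sMT m t) • ((sMT m t : ProjReps F (r+1)) : Fin (r+1) → F)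
          = g m t • (Fin.snoc m.val 0 : Fin (r+1) → F) + (g m t * t) • eP r := by
      intro m t
      rw [mkc_sMT, sMT_val, snoc_decomp, smul_add, smul_smul]
    calc (∑ m : ProjReps F r, ∑ t : F,
            mkc g ce (sMT m t) • ((sMT m t : ProjReps F (r+1)) : Fin (r+1) → F))
            + mkc g ce (sE r) • ((sE r : ProjReps F (r+1)) : Fin (r+1) → F)
        = (∑ m : ProjReps F r, ((sg (g m)) • (Fin.snoc m.val 0 : Fin (r+1) → F)
            + (st (g m)) • eP r)) + ce • eP r := by
          rw [mkc_sE, sE_val]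
          congr 1
          refine Finset.sum_congr rfl fun m _ => ?_
          rw [Finset.sum_congr rfl fun t _ => key m t, Finset.sum_add_distrib,
            ← Finset.sum_smul, ← Finset.sum_smul]
          rfl
      _ = (∑ m : ProjReps F r, (sg (g m)) • (Fin.snoc m.val 0 : Fin (r+1) → F))
            + ((∑ m : ProjReps F r, st (g m)) + ce) • eP r := by
          rw [Finset.sum_add_distrib, add_smul, ← Finset.sum_smul]
          abel
      _ = 0 := by rw [H1, H2]; simp
  · rw [hwt_card, Finset.card_filter,
      sum_split r (fun u => if mkc g ce u ≠ 0 then 1 else 0)]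
    congr 1
    · refine Finset.sum_congr rfl fun m _ => ?_
      rw [sc, Finset.card_filter]
      refine Finset.sum_congr rfl fun t _ => ?_
      rw [mkc_sMT]
    · rw [mkc_sE]
end Infra2

section Patterns
variable {F : Type*} [Field F] [Fintype F]

lemma exists_notin (s : Finset F) (h : s.card < Fintype.card F) : ∃ x, x ∉ s := by
  by_contra hc
  push_neg at hc
  have : s = univ := Finset.eq_univ_iff_forall.mpr hc
  rw [this, Finset.card_univ] at h
  exact lt_irrefl _ h

lemma sum_univ_eq_zero (hq : 2 < Fintype.card F) : ∑ t : F, t = 0 := by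
  have := FiniteField.sum_pow_lt_card_sub_one (K := F) 1 (by omega)
  simpa using this

def allones : F → F := fun _ => (1 : F)

lemma sc_allones : sc (allones (F := F)) = Fintype.card F := by
  rw [sc]
  simp [allones]

lemma sg_allones : sg (allones (F := F)) = 0 := by
  rw [sg]
  simp [allones, FiniteField.cast_card_eq_zero]

lemma st_allones (hq : 2 < Fintype.card F) : st (allones (F := F)) = 0 := by
  rw [st]
  simpa [allones] using sum_univ_eq_zero hq

open scoped Classical in
noncomputable def tri (x y z : F) : F → F := fun t =>
  if t = x then y - z else if t = y then z - x else if t = z then x - y else 0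

variable {x y z : F}

lemma tri_filter (hxy : x ≠ y) (hxz : x ≠ z) (hyz : y ≠ z) :
    univ.filter (fun t => tri x y z t ≠ 0) = ({x, y, z} : Finset F) := by
  ext t
  by_cases h1 : t = x
  · subst h1; simp only [Finset.mem_filter, Finset.mem_univ, true_and]; simp [tri, sub_ne_zero.mpr hyz]
  · by_cases h2 : t = y
    · subst h2; simp only [Finset.mem_filter, Finset.mem_univ, true_and]; simp [tri, h1, sub_ne_zero.mpr hxz.symm, hxy.symm]
    · by_cases h3 : t = z
      · subst h3; simp only [Finset.mem_filter, Finset.mem_univ, true_and]; simp [tri, h1, h2, sub_ne_zero.mpr hxy]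
      · simp only [Finset.mem_filter, Finset.mem_univ, true_and]; simp [tri, h1, h2, h3]

lemma sc_tri (hxy : x ≠ y) (hxz : x ≠ z) (hyz : y ≠ z) : sc (tri x y z) = 3 := by
  rw [sc, tri_filter hxy hxz hyz]
  rw [Finset.card_insert_of_notMem (by simp [hxy, hxz]),
    Finset.card_insert_of_notMem (by simp [hyz]), Finset.card_singleton]

lemma sum_eq_tri {β : Type*} [AddCommMonoid β] (hxy : x ≠ y) (hxz : x ≠ z) (hyz : y ≠ z)
    (f : F → β) (hf : ∀ t, t ≠ x → t ≠ y → t ≠ z → f t = 0) :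
    ∑ t : F, f t = f x + f y + f z := by
  rw [← Finset.sum_subset (Finset.subset_univ ({x, y, z} : Finset F))
    (fun t _ ht => hf t (by rintro rfl; simp at ht) (by rintro rfl; simp at ht)
      (by rintro rfl; simp at ht))]
  rw [Finset.sum_insert (by simp [hxy, hxz]), Finset.sum_insert (by simp [hyz]),
    Finset.sum_singleton]
  rw [add_assoc]

lemma tri_x : tri x y z x = y - z := by simp [tri]

lemma tri_y (hxy : x ≠ y) : tri x y z y = z - x := by simp [tri, hxy.symm]

lemma tri_z (hxz : x ≠ z) (hyz : y ≠ z) : tri x y z z = x - y := by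
  simp [tri, hxz.symm, hyz.symm]

lemma sg_tri (hxy : x ≠ y) (hxz : x ≠ z) (hyz : y ≠ z) : sg (tri x y z) = 0 := by
  rw [sg, sum_eq_tri hxy hxz hyz _ (fun t h1 h2 h3 => by simp [tri, h1, h2, h3])]
  rw [tri_x, tri_y hxy, tri_z hxz hyz]
  ring

lemma st_tri (hxy : x ≠ y) (hxz : x ≠ z) (hyz : y ≠ z) : st (tri x y z) = 0 := by
  rw [st, sum_eq_tri hxy hxz hyz _ (fun t h1 h2 h3 => by simp [tri, h1, h2, h3])]
  rw [tri_x, tri_y hxy, tri_z hxz hyz]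
  ring

open scoped Classical in
noncomputable def pr : F → F := fun t => if t = 1 then 1 else if t = 0 then -1 else 0

lemma sc_pr : sc (pr (F := F)) = 2 := by
  have h01 : (1 : F) ≠ 0 := one_ne_zero
  rw [sc]
  have : univ.filter (fun t => pr (F := F) t ≠ 0) = ({1, 0} : Finset F) := by
    ext t
    by_cases h1 : t = 1
    · subst h1; simp only [Finset.mem_filter, Finset.mem_univ, true_and]; simp [pr]
    · by_cases h2 : t = 0
      · subst h2; simp only [Finset.mem_filter, Finset.mem_univ, true_and]; simp [pr, h01.symm]
      · simp only [Finset.mem_filter, Finset.mem_univ, true_and]; simp [pr, h1, h2]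
  rw [this, Finset.card_insert_of_notMem (by simp [h01]), Finset.card_singleton]

lemma sg_pr : sg (pr (F := F)) = 0 := by
  classical
  rw [sg, ← Finset.sum_subset (Finset.subset_univ ({1, 0} : Finset F))
    (fun t _ ht => by
      simp only [Finset.mem_insert, Finset.mem_singleton, not_or] at ht
      simp [pr, ht.1, ht.2])]
  rw [Finset.sum_insert (by simp), Finset.sum_singleton]
  simp [pr, (one_ne_zero (α := F)).symm]

lemma st_pr : st (pr (F := F)) = 1 := by
  classical
  rw [st, ← Finset.sum_subset (Finset.subset_univ ({1, 0} : Finset F))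
    (fun t _ ht => by
      simp only [Finset.mem_insert, Finset.mem_singleton, not_or] at ht
      simp [pr, ht.1, ht.2])]
  rw [Finset.sum_insert (by simp), Finset.sum_singleton]
  simp [pr, (one_ne_zero (α := F)).symm]

lemma sc_neg (g : F → F) : sc (-g) = sc g := by
  rw [sc, sc]
  congr 1
  ext t
  simp

lemma sg_neg (g : F → F) : sg (-g) = - sg g := by
  rw [sg, sg, ← Finset.sum_neg_distrib]
  rfl

lemma st_neg (g : F → F) : st (-g) = - st g := by
  rw [st, st, ← Finset.sum_neg_distrib]
  simp [neg_mul]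

end Patterns

section Extend
variable {F : Type*} [Field F] [Fintype F]

lemma sg_addmul (g h : F → F) (μ : F) : sg (fun t => g t + μ * h t) = sg g + μ * sg h := by
  rw [sg, sg, sg, Finset.sum_add_distrib, Finset.mul_sum]

lemma st_addmul (g h : F → F) (μ : F) : st (fun t => g t + μ * h t) = st g + μ * st h := by
  rw [st, st, st, Finset.mul_sum, ← Finset.sum_add_distrib]
  exact Finset.sum_congr rfl fun t _ => by ring

lemma extend (hq4 : 4 ≤ Fintype.card F) (g : F → F) (h2 : 2 ≤ sc g)
    (hlt : sc g < Fintype.card F) :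
    ∃ g' : F → F, sc g' = sc g + 1 ∧ sg g' = sg g ∧ st g' = st g := by
  classical
  set S := univ.filter (fun t => g t ≠ 0) with hS
  obtain ⟨t0, ht0⟩ := exists_notin S hlt
  have hSc : sc g = S.card := by rw [sc, hS]
  obtain ⟨s, hsS, s', hs'S, hss'⟩ := Finset.one_lt_card.mp (by omega : 1 < S.card)
  have hgs : g s ≠ 0 := (Finset.mem_filter.mp hsS).2
  have hgs' : g s' ≠ 0 := (Finset.mem_filter.mp hs'S).2
  have hgt0 : g t0 = 0 := by
    by_contra h
    exact ht0 (Finset.mem_filter.mpr ⟨Finset.mem_univ _, h⟩)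
  have ht0s : t0 ≠ s := fun h => ht0 (h ▸ hsS)
  have ht0s' : t0 ≠ s' := fun h => ht0 (h ▸ hs'S)
  have hcard3 : ({0, -(g s)/(s' - t0), -(g s')/(t0 - s)} : Finset F).card ≤ 3 := by
    refine le_trans (Finset.card_insert_le _ _) (Nat.succ_le_succ ?_)
    exact le_trans (Finset.card_insert_le _ _) (by simp)
  obtain ⟨μ, hμ⟩ := exists_notin ({0, -(g s)/(s' - t0), -(g s')/(t0 - s)} : Finset F)
    (lt_of_le_of_lt hcard3 (by omega))
  simp only [Finset.mem_insert, Finset.mem_singleton, not_or] at hμ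
  obtain ⟨hμ0, hμ1, hμ2⟩ := hμ
  refine ⟨fun t => g t + μ * tri t0 s s' t, ?_, ?_, ?_⟩
  · rw [sc]
    have hfil : univ.filter (fun t => g t + μ * tri t0 s s' t ≠ 0) = insert t0 S := by
      ext t
      by_cases h1 : t = t0
      · subst h1
        simp only [Finset.mem_insert, Finset.mem_filter, Finset.mem_univ, true_and]
        rw [hgt0, tri_x, zero_add]
        have : μ * (s - s') ≠ 0 := mul_ne_zero hμ0 (sub_ne_zero.mpr hss')
        simp [this]
      · by_cases h2' : t = s
        · rw [h2']
          simp only [Finset.mem_insert, Finset.mem_filter, Finset.mem_univ, true_and]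
          rw [tri_y ht0s]
          have hd : s' - t0 ≠ 0 := sub_ne_zero.mpr (fun hh => ht0s' hh.symm)
          have hne : g s + μ * (s' - t0) ≠ 0 := by
            intro h
            apply hμ1
            rw [eq_div_iff hd]
            linear_combination h
          simp [hne, hsS]
        · by_cases h3' : t = s'
          · rw [h3']
            simp only [Finset.mem_insert, Finset.mem_filter, Finset.mem_univ, true_and]
            rw [tri_z ht0s' hss']
            have hd : t0 - s ≠ 0 := sub_ne_zero.mpr ht0s
            have hne : g s' + μ * (t0 - s) ≠ 0 := by
              intro h
              apply hμ2
              rw [eq_div_iff hd]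
              linear_combination h
            simp [hne, hs'S]
          · have : tri t0 s s' t = 0 := by simp [tri, h1, h2', h3']
            simp [this, h1, hS]
    rw [hfil, Finset.card_insert_of_notMem ht0, hS, sc]
  · rw [sg_addmul, sg_tri ht0s ht0s' hss', mul_zero, add_zero]
  · rw [st_addmul, st_tri ht0s ht0s' hss', mul_zero, add_zero]

lemma upto (hq4 : 4 ≤ Fintype.card F) (g0 : F → F) (h2 : 2 ≤ sc g0) :
    ∀ k, sc g0 ≤ k → k ≤ Fintype.card F →
      ∃ g : F → F, sc g = k ∧ sg g = sg g0 ∧ st g = st g0 := by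
  intro k
  induction k with
  | zero => intro h1 _; omega
  | succ k ih =>
    intro h1 hk
    by_cases he : sc g0 = k + 1
    · exact ⟨g0, he, rfl, rfl⟩
    · obtain ⟨g, hg1, hg2, hg3⟩ := ih (by omega) (by omega)
      obtain ⟨g', h1', h2', h3'⟩ := extend hq4 g (by omega) (by omega)
      exact ⟨g', by omega, by rw [h2', hg2], by rw [h3', hg3]⟩

/-- closed patterns of any size `3 ≤ k ≤ q` -/
lemma PC (hq : 2 < Fintype.card F) (k : ℕ) (h3 : 3 ≤ k) (hk : k ≤ Fintype.card F) :
    ∃ g : F → F, sc g = k ∧ sg g = 0 ∧ st g = 0 := by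
  obtain ⟨z, hz⟩ := exists_notin ({0, 1} : Finset F)
    (lt_of_le_of_lt (Finset.card_insert_le _ _) (by simp; omega))
  simp only [Finset.mem_insert, Finset.mem_singleton, not_or] at hz
  have h01 : (0 : F) ≠ 1 := zero_ne_one
  have base : sc (tri (0:F) 1 z) = 3 ∧ sg (tri (0:F) 1 z) = 0 ∧ st (tri (0:F) 1 z) = 0 :=
    ⟨sc_tri h01 (Ne.symm hz.1) (Ne.symm hz.2), sg_tri h01 (Ne.symm hz.1) (Ne.symm hz.2),
      st_tri h01 (Ne.symm hz.1) (Ne.symm hz.2)⟩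
  rcases Nat.eq_or_lt_of_le h3 with he | hlt
  · exact ⟨tri 0 1 z, he ▸ base.1, base.2.1, base.2.2⟩
  · obtain ⟨g, h1, h2', h3'⟩ := upto (by omega) (tri 0 1 z) (by rw [base.1]; omega) k
      (by rw [base.1]; omega) hk
    exact ⟨g, h1, by rw [h2', base.2.1], by rw [h3', base.2.2]⟩

/-- patterns with `st = 1` of any size `2 ≤ k ≤ q` (for `k > 2` we need `q ≥ 4`) -/
lemma PD (k : ℕ) (h2 : 2 ≤ k) (hk : k ≤ Fintype.card F) (h4 : k = 2 ∨ 4 ≤ Fintype.card F) :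
    ∃ g : F → F, sc g = k ∧ sg g = 0 ∧ st g = 1 := by
  rcases Nat.eq_or_lt_of_le h2 with he | hlt
  · exact ⟨pr, he ▸ sc_pr, sg_pr, st_pr⟩
  · have hq4 : 4 ≤ Fintype.card F := by
      rcases h4 with h | h
      · omega
      · exact h
    obtain ⟨g, h1, h2', h3'⟩ := upto hq4 pr (by rw [sc_pr]) k (by rw [sc_pr]; omega) hk
    exact ⟨g, h1, by rw [h2', sg_pr], by rw [h3', st_pr]⟩

end Extend

section Card
variable {F : Type*} [Field F] [Fintype F]

lemma card_projreps : ∀ r : ℕ,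
    Fintype.card (ProjReps F r) = ∑ i ∈ Finset.range r, (Fintype.card F)^i := by
  intro r
  induction r with
  | zero =>
    rw [Finset.range_zero, Finset.sum_empty]
    rw [Fintype.card_eq_zero_iff]
    exact ⟨fun u => by obtain ⟨i, -, -⟩ := u.2; exact i.elim0⟩
  | succ r ih =>
    have := Fintype.card_congr (equivP (F := F) r)
    rw [Fintype.card_sum, Fintype.card_prod, Fintype.card_unit] at this
    rw [this, ih, Finset.sum_range_succ']
    simp [pow_succ, ← Finset.sum_mul]

lemma geom_nat (d : ℕ) : ∀ r : ℕ, (∑ i ∈ Finset.range r, (d+1)^i) * d + 1 = (d+1)^r := by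
  intro r
  induction r with
  | zero => simp
  | succ r ih =>
    rw [Finset.sum_range_succ, add_mul, add_right_comm, ih, pow_succ]
    ring

lemma card_div (r : ℕ) (hq : 2 < Fintype.card F) :
    ((Fintype.card F)^r - 1) / (Fintype.card F - 1) = Fintype.card (ProjReps F r) := by
  obtain ⟨d, hd⟩ : ∃ d, Fintype.card F = d + 1 := ⟨Fintype.card F - 1, by omega⟩
  rw [card_projreps, hd]
  have h1 : (d+1)^r - 1 = (∑ i ∈ Finset.range r, (d+1)^i) * d :=
    Nat.sub_eq_of_eq_add (geom_nat d r).symm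
  rw [h1, Nat.add_sub_cancel, Nat.mul_div_cancel _ (by omega : 0 < d)]

lemma card_succ (r : ℕ) :
    Fintype.card (ProjReps F (r+1))
      = Fintype.card F * Fintype.card (ProjReps F r) + 1 := by
  have := Fintype.card_congr (equivP (F := F) r)
  rw [Fintype.card_sum, Fintype.card_prod, Fintype.card_unit] at this
  rw [this, mul_comm]

lemma sc_zero : sc (0 : F → F) = 0 := by simp [sc]

lemma sg_zero : sg (0 : F → F) = 0 := by simp [sg]

lemma st_zero : st (0 : F → F) = 0 := by simp [st]

lemma lsum {β : Type*} [AddCommMonoid β] (φ : (F → F) → β) (hφ : φ 0 = 0) :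
    ∀ (L : List (F → F)) (n : ℕ), L.length ≤ n →
      ∑ i : Fin n, φ (L.getD i 0) = (L.map φ).sum := by
  intro L
  induction L with
  | nil => intro n _; simp [hφ]
  | cons g L ih =>
    intro n hn
    cases n with
    | zero => simp at hn
    | succ n =>
      rw [Fin.sum_univ_succ]
      simp only [Fin.val_succ, Fin.val_zero, List.getD_cons_zero, List.getD_cons_succ,
        List.map_cons, List.sum_cons]
      rw [ih n (by simpa using hn)]

lemma master (r : ℕ) (L : List (F → F))
    (hlen : L.length ≤ Fintype.card (ProjReps F r))
    (hσ : ∀ g ∈ L, sg g = 0) :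
    ∃ c ∈ HammingCode F (r+1),
      hwt c = (L.map sc).sum + (if (L.map st).sum ≠ 0 then 1 else 0) := by
  classical
  set n' := Fintype.card (ProjReps F r)
  let ψ := Fintype.equivFin (ProjReps F r)
  set G : ProjReps F r → F → F := fun m => L.getD (ψ m) 0 with hG
  set ce : F := -(L.map st).sum with hce
  have hsgG : ∀ m, sg (G m) = 0 := by
    intro m
    show sg (L.getD (ψ m) 0) = 0
    by_cases h : (ψ m : ℕ) < L.length
    · rw [List.getD_eq_getElem _ _ h]
      exact hσ _ (List.getElem_mem h)
    · rw [List.getD_eq_default _ _ (by omega)]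
      exact sg_zero
  have hsum : ∀ (φ : (F → F) → F), φ 0 = 0 →
      ∑ m : ProjReps F r, φ (G m) = (L.map φ).sum := by
    intro φ hφ
    show (∑ m : ProjReps F r, φ (L.getD (ψ m) 0)) = _
    calc ∑ m : ProjReps F r, φ (L.getD (ψ m) 0)
        = ∑ i : Fin n', φ (L.getD i 0) := Equiv.sum_comp ψ (fun i => φ (L.getD i 0))
      _ = (L.map φ).sum := lsum φ hφ L n' hlen
  have hsumN : ∑ m : ProjReps F r, sc (G m) = (L.map sc).sum := by
    show (∑ m : ProjReps F r, sc (L.getD (ψ m) 0)) = _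
    calc ∑ m : ProjReps F r, sc (L.getD (ψ m) 0)
        = ∑ i : Fin n', sc (L.getD i 0) := Equiv.sum_comp ψ (fun i => sc (L.getD i 0))
      _ = (L.map sc).sum := lsum sc sc_zero L n' hlen
  obtain ⟨hcode, hwt⟩ := core G ce
    (by
      refine Finset.sum_eq_zero fun m _ => ?_
      rw [hsgG m, zero_smul])
    (by rw [hsum st st_zero, hce, add_neg_cancel])
  refine ⟨mkc G ce, hcode, ?_⟩
  rw [hwt, hsumN, hce]
  congr 1
  simp [neg_ne_zero]

end Card

section Bounds
variable {F : Type*} [Field F] [Fintype F]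

lemma zero_mem_code (r : ℕ) : (0 : ProjReps F r → F) ∈ HammingCode F r := by
  show ∑ᶠ u : ProjReps F r, (0 : ProjReps F r → F) u • (u : Fin r → F) = 0
  simp

lemma hwt_zero {ι : Type*} : hwt (0 : ι → F) = 0 := by
  simp [hwt]

lemma hwt_le {r : ℕ} (c : ProjReps F r → F) : hwt c ≤ Fintype.card (ProjReps F r) := by
  rw [hwt_card]
  exact le_trans (Finset.card_filter_le _ _) (le_of_eq (Finset.card_univ))

lemma minwt {r : ℕ} {c : ProjReps F r → F} (hc : c ∈ HammingCode F r) (h0 : c ≠ 0) :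
    3 ≤ hwt c := by
  classical
  have hcode : ∑ u : ProjReps F r, c u • (u : Fin r → F) = 0 := by
    rw [← finsum_eq_sum_of_fintype]
    exact hc
  set s := univ.filter (fun u : ProjReps F r => c u ≠ 0) with hs
  have hsum : ∑ u ∈ s, c u • (u : Fin r → F) = 0 := by
    rw [hs, Finset.sum_filter_of_ne (fun u _ h => by
      intro hcu
      rw [hcu, zero_smul] at h
      exact h rfl)]
    exact hcode
  have hne : s.Nonempty := by
    obtain ⟨u, hu⟩ := Function.ne_iff.mp h0
    exact ⟨u, Finset.mem_filter.mpr ⟨Finset.mem_univ _, by simpa using hu⟩⟩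
  have h1 : s.card ≠ 1 := by
    intro h
    obtain ⟨u, hu⟩ := Finset.card_eq_one.mp h
    have humem : u ∈ s := hu ▸ Finset.mem_singleton_self u
    have hcu : c u ≠ 0 := (Finset.mem_filter.mp humem).2
    rw [hu, Finset.sum_singleton] at hsum
    rcases smul_eq_zero.mp hsum with h' | h'
    · exact hcu h'
    · exact projreps_ne_zero u.2 h'
  have h2 : s.card ≠ 2 := by
    intro h
    obtain ⟨u, v, huv, huvs⟩ := Finset.card_eq_two.mp h
    have humem : u ∈ s := huvs ▸ Finset.mem_insert_self u {v}
    have hvmem : v ∈ s := huvs ▸ Finset.mem_insert_of_mem (Finset.mem_singleton_self v)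
    have hcu : c u ≠ 0 := (Finset.mem_filter.mp humem).2
    have hcv : c v ≠ 0 := (Finset.mem_filter.mp hvmem).2
    rw [huvs, Finset.sum_pair huv] at hsum
    have hh : c u • (u : Fin r → F) = -(c v • (v : Fin r → F)) :=
      eq_neg_of_add_eq_zero_left hsum
    have h3 : ((c u)⁻¹ * (-(c v))) • (v : Fin r → F) = (u : Fin r → F) := by
      rw [mul_smul, neg_smul, ← hh, smul_smul, inv_mul_cancel₀ hcu, one_smul]
    exact huv (Subtype.ext (projreps_eq_of_smul u.2 v.2 h3.symm))
  have : hwt c = s.card := hwt_card c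
  have h3 : 1 ≤ s.card := Finset.card_pos.mpr hne
  omega

end Bounds

section F3
variable {F : Type*} [Field F] [Fintype F] (hq3 : Fintype.card F = 3)
include hq3

lemma F3_three : (3 : F) = 0 := by
  have := FiniteField.cast_card_eq_zero F
  rw [hq3] at this
  exact_mod_cast this

lemma F3_ne : (1 : F) ≠ -1 := by
  intro h
  have h1 : (1 : F) = 0 := by linear_combination F3_three hq3 - h
  exact one_ne_zero h1

lemma F3_univ : (univ : Finset F) = {0, 1, -1} := by
  symm
  apply Finset.eq_univ_of_card
  rw [Finset.card_insert_of_notMem (by simp), Finset.card_insert_of_notMem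
    (by simpa using F3_ne hq3), Finset.card_singleton, hq3]

lemma F3_cases (x : F) : x = 0 ∨ x = 1 ∨ x = -1 := by
  have hx : x ∈ (univ : Finset F) := Finset.mem_univ x
  rw [F3_univ hq3] at hx
  simpa using hx

lemma F3_sum {β : Type*} [AddCommMonoid β] (f : F → β) :
    ∑ t : F, f t = f 0 + f 1 + f (-1) := by
  rw [F3_univ hq3, Finset.sum_insert (by simp), Finset.sum_insert
    (by simpa using F3_ne hq3), Finset.sum_singleton, add_assoc]

/-- the tetracode fact: a full-support pattern with `sg = 0` has `st = 0` when `q = 3`. -/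
lemma F3_full (g : F → F) (hfull : ∀ t, g t ≠ 0) (hsg : sg g = 0) : st g = 0 := by
  have hsum := (F3_sum hq3 g).symm.trans hsg
  have hst : st g = g 1 - g (-1) := by
    rw [st, F3_sum hq3 (fun t => g t * t)]
    ring
  have h1 : g 1 = g (-1) := by
    rcases F3_cases hq3 (g 0) with h | h | h
    · exact absurd h (hfull 0)
    · rcases F3_cases hq3 (g 1) with h' | h' | h'
      · exact absurd h' (hfull 1)
      · rcases F3_cases hq3 (g (-1)) with h'' | h'' | h''
        · exact absurd h'' (hfull (-1))
        · rw [h', h'']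
        · exfalso
          rw [h, h', h''] at hsum
          exact one_ne_zero (by linear_combination hsum)
      · rcases F3_cases hq3 (g (-1)) with h'' | h'' | h''
        · exact absurd h'' (hfull (-1))
        · exfalso
          rw [h, h', h''] at hsum
          exact one_ne_zero (by linear_combination hsum)
        · rw [h', h'']
    · rcases F3_cases hq3 (g 1) with h' | h' | h'
      · exact absurd h' (hfull 1)
      · rcases F3_cases hq3 (g (-1)) with h'' | h'' | h''
        · exact absurd h'' (hfull (-1))
        · rw [h', h'']
        · exfalso
          rw [h, h', h''] at hsum
          exact one_ne_zero (by linear_combination -hsum)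
      · rcases F3_cases hq3 (g (-1)) with h'' | h'' | h''
        · exact absurd h'' (hfull (-1))
        · exfalso
          rw [h, h', h''] at hsum
          exact one_ne_zero (by linear_combination -hsum)
        · rw [h', h'']
  rw [hst, h1, sub_self]

open scoped Classical in
noncomputable def qA : F → F := fun t => if t = 1 then -1 else 1
open scoped Classical in
noncomputable def qB : F → F := fun t => if t = 0 then -1 else 1

omit hq3 in
lemma qA_ne (t : F) : qA t ≠ 0 := by
  rw [qA]
  split_ifs
  · exact neg_ne_zero.mpr one_ne_zero
  · exact one_ne_zero

omit hq3 in
lemma qB_ne (t : F) : qB t ≠ 0 := by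
  rw [qB]
  split_ifs
  · exact neg_ne_zero.mpr one_ne_zero
  · exact one_ne_zero

lemma sc_full (g : F → F) (h : ∀ t, g t ≠ 0) : sc g = 3 := by
  rw [sc]
  have : univ.filter (fun t => g t ≠ 0) = univ := Finset.filter_true_of_mem (fun t _ => h t)
  rw [this, Finset.card_univ, hq3]

omit hq3 in
lemma qA_0 : qA (0 : F) = 1 := by simp [qA]

omit hq3 in
lemma qA_1 : qA (1 : F) = -1 := by simp [qA]

lemma qA_m1 : qA (-1 : F) = 1 := by
  have := Ne.symm (F3_ne hq3)
  simp [qA, this]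

omit hq3 in
lemma qB_0 : qB (0 : F) = -1 := by simp [qB]

omit hq3 in
lemma qB_1 : qB (1 : F) = 1 := by simp [qB]

omit hq3 in
lemma qB_m1 : qB (-1 : F) = 1 := by simp [qB]

lemma sg_qA : sg (qA (F := F)) = 1 := by
  rw [sg, F3_sum hq3, qA_0, qA_1, qA_m1 hq3]
  ring

lemma st_qA : st (qA (F := F)) = 1 := by
  rw [st, F3_sum hq3 (fun t => qA t * t), qA_0, qA_1, qA_m1 hq3]
  linear_combination -F3_three hq3

lemma sg_qB : sg (qB (F := F)) = 1 := by
  rw [sg, F3_sum hq3, qB_0, qB_1, qB_m1]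
  ring

lemma st_qB : st (qB (F := F)) = 0 := by
  rw [st, F3_sum hq3 (fun t => qB t * t), qB_0, qB_1, qB_m1]
  ring

end F3

section FullQ3
variable {F : Type*} [Field F] [Fintype F]

lemma snoc_add {r : ℕ} (a b : Fin r → F) :
    (Fin.snoc a (0:F) : Fin (r+1) → F) + Fin.snoc b 0 = Fin.snoc (a + b) 0 := by
  funext j
  rcases Fin.eq_castSucc_or_eq_last j with ⟨j', rfl⟩ | rfl
  · simp
  · simp

lemma achieve_full_q3 (r : ℕ) (hq3 : Fintype.card F = 3) :
    ∃ c ∈ HammingCode F (r+2+1),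
      hwt c = 3 * Fintype.card (ProjReps F (r+2)) + 1 := by
  classical
  have h01 : (0 : Fin (r+2)) ≠ 1 := by simp [Fin.ext_iff]
  set m1 : Fin (r+2) → F := fun j => if j = 0 then 1 else 0 with hm1def
  set m2 : Fin (r+2) → F := fun j => if j = 1 then 1 else 0 with hm2def
  have hm1 : m1 ∈ ProjReps F (r+2) :=
    ⟨0, by simp [hm1def], fun j hj => absurd hj (by simp)⟩
  have hm2 : m2 ∈ ProjReps F (r+2) :=
    ⟨1, by simp [hm2def], fun j hj => by
      have hj0 : j = 0 := (Fin.lt_one_iff _).mp hj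
      rw [hj0, hm2def]
      simp [h01]⟩
  have hm3 : m1 + m2 ∈ ProjReps F (r+2) :=
    ⟨0, by simp [hm1def, hm2def, h01], fun j hj => absurd hj (by simp)⟩
  set M1 : ProjReps F (r+2) := ⟨m1, hm1⟩ with hM1
  set M2 : ProjReps F (r+2) := ⟨m2, hm2⟩ with hM2
  set M3 : ProjReps F (r+2) := ⟨m1 + m2, hm3⟩ with hM3
  have e1 : (M1 : Fin (r+2) → F) = m1 := rfl
  have e2 : (M2 : Fin (r+2) → F) = m2 := rfl
  have e3 : (M3 : Fin (r+2) → F) = m1 + m2 := rfl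
  have hne12 : M1 ≠ M2 := by
    intro h
    have h' := congrFun (congrArg Subtype.val h) 0
    rw [e1, e2, hm1def, hm2def] at h'
    simp [h01] at h'
  have hne13 : M1 ≠ M3 := by
    intro h
    have h' := congrFun (congrArg Subtype.val h) 1
    rw [e1, e3] at h'
    simp only [Pi.add_apply, hm1def, hm2def] at h'
    simp [h01.symm] at h'
  have hne23 : M2 ≠ M3 := by
    intro h
    have h' := congrFun (congrArg Subtype.val h) 0
    rw [e2, e3] at h'
    simp only [Pi.add_apply, hm1def, hm2def] at h'
    simp [h01] at h'
  set G : ProjReps F (r+2) → F → F := fun m =>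
    if m = M1 then qA else if m = M2 then qB else if m = M3 then -qB else allones with hGdef
  have hGM1 : G M1 = qA := by rw [hGdef]; simp
  have hGM2 : G M2 = qB := by rw [hGdef]; simp [Ne.symm hne12]
  have hGM3 : G M3 = -qB := by rw [hGdef]; simp [Ne.symm hne13, Ne.symm hne23]
  have hGother : ∀ m, m ≠ M1 → m ≠ M2 → m ≠ M3 → G m = allones := by
    intro m h1 h2 h3
    rw [hGdef]
    simp [h1, h2, h3]
  have hsub : ({M1, M2, M3} : Finset (ProjReps F (r+2))) ⊆ univ := Finset.subset_univ _
  have hq2 : 2 < Fintype.card F := by omega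
  have hnotmem1 : M1 ∉ ({M2, M3} : Finset (ProjReps F (r+2))) := by simp [hne12, hne13]
  have hnotmem2 : M2 ∉ ({M3} : Finset (ProjReps F (r+2))) := by simp [hne23]
  obtain ⟨hcode, hwtc⟩ := core G (-1)
    (by
      rw [← Finset.sum_subset hsub (fun m _ hm => ?_)]
      · rw [Finset.sum_insert hnotmem1, Finset.sum_insert hnotmem2, Finset.sum_singleton]
        rw [hGM1, hGM2, hGM3, sg_qA hq3, sg_qB hq3, sg_neg, sg_qB hq3]
        rw [e1, e2, e3, one_smul, one_smul, neg_smul, one_smul]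
        rw [← snoc_add m1 m2]
        abel
      · simp only [Finset.mem_insert, Finset.mem_singleton, not_or] at hm
        rw [hGother m hm.1 hm.2.1 hm.2.2, sg_allones, zero_smul])
    (by
      rw [← Finset.sum_subset hsub (fun m _ hm => ?_)]
      · rw [Finset.sum_insert hnotmem1, Finset.sum_insert hnotmem2, Finset.sum_singleton]
        rw [hGM1, hGM2, hGM3, st_qA hq3, st_qB hq3, st_neg, st_qB hq3]
        ring
      · simp only [Finset.mem_insert, Finset.mem_singleton, not_or] at hm
        rw [hGother m hm.1 hm.2.1 hm.2.2, st_allones hq2])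
  refine ⟨mkc G (-1), hcode, ?_⟩
  rw [hwtc]
  have hsc : ∀ m, sc (G m) = 3 := by
    intro m
    by_cases h1 : m = M1
    · rw [h1, hGM1, sc_full hq3 _ qA_ne]
    · by_cases h2 : m = M2
      · rw [h2, hGM2, sc_full hq3 _ qB_ne]
      · by_cases h3 : m = M3
        · rw [h3, hGM3, sc_neg, sc_full hq3 _ qB_ne]
        · rw [hGother m h1 h2 h3, sc_allones, hq3]
  rw [Finset.sum_congr rfl (fun m _ => hsc m), Finset.sum_const, Finset.card_univ,
    smul_eq_mul, mul_comm]
  have : (-1 : F) ≠ 0 := neg_ne_zero.mpr one_ne_zero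
  simp [this]

end FullQ3

section Achieve
variable {F : Type*} [Field F] [Fintype F]

lemma achieve (s : ℕ) (hq : 2 < Fintype.card F)
    (hexc : Fintype.card F = 3 → 2 ≤ s)
    (w : ℕ) (h3 : 3 ≤ w)
    (hw : w ≤ Fintype.card F * Fintype.card (ProjReps F s) + 1) :
    ∃ c ∈ HammingCode F (s+1), hwt c = w := by
  classical
  have hq0 : 0 < Fintype.card F := by omega
  obtain ⟨a, b, hab, hblt⟩ :
      ∃ a b, Fintype.card F * a + b = w ∧ b < Fintype.card F :=
    ⟨_, _, Nat.div_add_mod w _, Nat.mod_lt _ hq0⟩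
  have hale : a ≤ Fintype.card (ProjReps F s) := by
    by_contra hcon
    push_neg at hcon
    have h1 : Fintype.card F * Fintype.card (ProjReps F s) + Fintype.card F
        ≤ Fintype.card F * a := by
      calc Fintype.card F * Fintype.card (ProjReps F s) + Fintype.card F
          = Fintype.card F * (Fintype.card (ProjReps F s) + 1) := by ring
        _ ≤ Fintype.card F * a := Nat.mul_le_mul_left _ hcon
    linarith [hab, hw]
  have haltn : 2 ≤ b → a < Fintype.card (ProjReps F s) := by
    intro hb2
    rcases Nat.lt_or_ge a (Fintype.card (ProjReps F s)) with h | h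
    · exact h
    · exfalso
      have h1 : a = Fintype.card (ProjReps F s) := le_antisymm hale h
      rw [h1] at hab
      linarith [hab, hw]
  by_cases hb0 : b = 0
  · -- a full lines
    have ha1 : 1 ≤ a := by
      rcases Nat.eq_zero_or_pos a with h | h
      · rw [h, mul_zero, zero_add] at hab
        omega
      · exact h
    obtain ⟨c, hc, hwtc⟩ := master (F := F) s (List.replicate a allones)
      (by rwa [List.length_replicate])
      (fun g hg => by rw [List.eq_of_mem_replicate hg]; exact sg_allones)
    refine ⟨c, hc, ?_⟩
    rw [hwtc]
    simp only [List.map_replicate, List.sum_replicate, smul_eq_mul, sc_allones,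
      st_allones hq, smul_zero]
    rw [if_neg (show ¬((0:F) ≠ 0) by simp)]
    linarith [hab]
  · by_cases hb1 : b = 1
    · have ha1 : 1 ≤ a := by
        rcases Nat.eq_zero_or_pos a with h | h
        · rw [h, mul_zero, zero_add] at hab
          omega
        · exact h
      obtain ⟨a', rfl⟩ : ∃ a', a = a' + 1 := ⟨a - 1, by omega⟩
      by_cases hq3 : Fintype.card F = 3
      · by_cases han : a' + 1 = Fintype.card (ProjReps F s)
        · -- full weight, q = 3
          obtain ⟨r', hr'⟩ : ∃ r', s = r' + 2 := ⟨s - 2, by have := hexc hq3; omega⟩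
          subst hr'
          obtain ⟨c, hc, hwtc⟩ := achieve_full_q3 r' hq3
          refine ⟨c, hc, ?_⟩
          rw [hwtc]
          rw [hq3] at hab
          omega
        · -- a'+1 < n' : (a') full lines + two pairs
          have hlen : a' + 2 ≤ Fintype.card (ProjReps F s) := by omega
          obtain ⟨c, hc, hwtc⟩ := master (F := F) s (List.replicate a' allones ++ [pr, -pr])
            (by simp only [List.length_append, List.length_replicate, List.length_cons,
              List.length_nil]; omega)
            (fun g hg => by
              rcases List.mem_append.mp hg with h | h
              · rw [List.eq_of_mem_replicate h]; exact sg_allones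
              · rcases List.mem_cons.mp h with rfl | h
                · exact sg_pr
                · rw [List.mem_singleton.mp h, sg_neg, sg_pr, neg_zero])
          refine ⟨c, hc, ?_⟩
          rw [hwtc]
          simp only [List.map_append, List.map_replicate, List.map_cons, List.map_nil,
            List.sum_append, List.sum_replicate, List.sum_cons, List.sum_nil,
            sc_allones, sc_neg, sc_pr, st_allones hq, st_neg, st_pr, smul_eq_mul,
            smul_zero, add_zero, add_neg_cancel, zero_add]
          rw [if_neg (show ¬((0:F) ≠ 0) by simp)]
          rw [hq3] at hab ⊢
          omega
      · -- q ≥ 4 : (a') full lines + D_q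
        have hq4 : 4 ≤ Fintype.card F := by omega
        obtain ⟨gD, hgD1, hgD2, hgD3⟩ := PD (Fintype.card F) (by omega) (le_refl _)
          (Or.inr hq4)
        obtain ⟨c, hc, hwtc⟩ := master (F := F) s (List.replicate a' allones ++ [gD])
          (by simp only [List.length_append, List.length_replicate, List.length_cons,
            List.length_nil]; omega)
          (fun g hg => by
            rcases List.mem_append.mp hg with h | h
            · rw [List.eq_of_mem_replicate h]; exact sg_allones
            · rw [List.mem_singleton.mp h]; exact hgD2)
        refine ⟨c, hc, ?_⟩
        rw [hwtc]
        simp only [List.map_append, List.map_replicate, List.map_cons, List.map_nil,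
          List.sum_append, List.sum_replicate, List.sum_cons, List.sum_nil,
          sc_allones, st_allones hq, hgD1, hgD3, smul_eq_mul, smul_zero, add_zero,
          zero_add]
        rw [if_pos (one_ne_zero (α := F))]
        linarith [hab]
    · by_cases hb2 : b = 2
      · have ha1 : 1 ≤ a := by
          rcases Nat.eq_zero_or_pos a with h | h
          · rw [h, mul_zero, zero_add] at hab
            omega
          · exact h
        obtain ⟨a', rfl⟩ : ∃ a', a = a' + 1 := ⟨a - 1, by omega⟩
        have hlen : a' + 2 ≤ Fintype.card (ProjReps F s) := by
          have := haltn (by omega)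
          omega
        by_cases hq3 : Fintype.card F = 3
        · -- two pairs with st = 2 ≠ 0
          have h2ne : (1 : F) + 1 ≠ 0 := by
            intro h
            have h31 : (3 : F) = 0 := F3_three hq3
            exact one_ne_zero (by linear_combination h31 - h)
          obtain ⟨c, hc, hwtc⟩ := master (F := F) s (List.replicate a' allones ++ [pr, pr])
            (by simp only [List.length_append, List.length_replicate, List.length_cons,
              List.length_nil]; omega)
            (fun g hg => by
              rcases List.mem_append.mp hg with h | h
              · rw [List.eq_of_mem_replicate h]; exact sg_allones
              · rcases List.mem_cons.mp h with rfl | h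
                · exact sg_pr
                · rw [List.mem_singleton.mp h]; exact sg_pr)
          refine ⟨c, hc, ?_⟩
          rw [hwtc]
          simp only [List.map_append, List.map_replicate, List.map_cons, List.map_nil,
            List.sum_append, List.sum_replicate, List.sum_cons, List.sum_nil,
            sc_allones, sc_pr, st_allones hq, st_pr, smul_eq_mul, smul_zero,
            add_zero, zero_add]
          rw [if_pos h2ne]
          rw [hq3] at hab ⊢
          omega
        · -- q ≥ 4 : pair + C_{q-1}
          have hq4 : 4 ≤ Fintype.card F := by omega
          obtain ⟨gC, hgC1, hgC2, hgC3⟩ := PC (F := F) (by omega) (Fintype.card F - 1)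
            (by omega) (by omega)
          obtain ⟨c, hc, hwtc⟩ := master (F := F) s (List.replicate a' allones ++ [pr, gC])
            (by simp only [List.length_append, List.length_replicate, List.length_cons,
              List.length_nil]; omega)
            (fun g hg => by
              rcases List.mem_append.mp hg with h | h
              · rw [List.eq_of_mem_replicate h]; exact sg_allones
              · rcases List.mem_cons.mp h with rfl | h
                · exact sg_pr
                · rw [List.mem_singleton.mp h]; exact hgC2)
          refine ⟨c, hc, ?_⟩
          rw [hwtc]
          simp only [List.map_append, List.map_replicate, List.map_cons, List.map_nil,
            List.sum_append, List.sum_replicate, List.sum_cons, List.sum_nil,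
            sc_allones, sc_pr, st_allones hq, st_pr, hgC1, hgC3, smul_eq_mul,
            smul_zero, add_zero, zero_add]
          rw [if_pos (one_ne_zero (α := F))]
          have hqm : 2 + (Fintype.card F - 1) + 1 = Fintype.card F + 2 := by omega
          linarith [hab, hqm]
      · -- 3 ≤ b
        have hb3 : 3 ≤ b := by omega
        have hlen : a + 1 ≤ Fintype.card (ProjReps F s) := haltn (by omega)
        obtain ⟨gB, hgB1, hgB2, hgB3⟩ := PC (F := F) (by omega) b hb3 (by omega)
        obtain ⟨c, hc, hwtc⟩ := master (F := F) s (List.replicate a allones ++ [gB])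
          (by simp only [List.length_append, List.length_replicate, List.length_cons,
              List.length_nil]; omega)
          (fun g hg => by
            rcases List.mem_append.mp hg with h | h
            · rw [List.eq_of_mem_replicate h]; exact sg_allones
            · rw [List.mem_singleton.mp h]; exact hgB2)
        refine ⟨c, hc, ?_⟩
        rw [hwtc]
        simp only [List.map_append, List.map_replicate, List.map_cons, List.map_nil,
          List.sum_append, List.sum_replicate, List.sum_cons, List.sum_nil,
          sc_allones, st_allones hq, hgB1, hgB3, smul_eq_mul, smul_zero, add_zero,
          zero_add]
        rw [if_neg (show ¬((0:F) ≠ 0) by simp)]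
        linarith [hab]

end Achieve

section Tetra
variable {F : Type*} [Field F] [Fintype F]

lemma card_p1 : Fintype.card (ProjReps F 1) = 1 := by
  rw [card_projreps]
  simp

lemma tetra_no4 (hq3 : Fintype.card F = 3) {c : ProjReps F (1+1) → F}
    (hc : c ∈ HammingCode F (1+1)) (h4 : hwt c = 4) : False := by
  classical
  have hcard2 : Fintype.card (ProjReps F (1+1)) = 4 := by
    rw [card_succ, card_p1, hq3]
  have hfull : ∀ u, c u ≠ 0 := by
    have hfil : (univ.filter (fun u : ProjReps F (1+1) => c u ≠ 0)).card = 4 := by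
      rw [← hwt_card, h4]
    have := Finset.eq_univ_of_card _ (by rw [hfil, hcard2])
    intro u
    have hu : u ∈ univ.filter (fun u : ProjReps F (1+1) => c u ≠ 0) := by
      rw [this]; exact Finset.mem_univ u
    exact (Finset.mem_filter.mp hu).2
  obtain ⟨m₀, hm₀⟩ := Fintype.card_eq_one_iff.mp (card_p1 (F := F))
  have hm0val : (m₀ : Fin 1 → F) = fun _ => 1 := by
    obtain ⟨i, hi1, -⟩ := m₀.2
    funext j
    have hji : j = i := Subsingleton.elim j i
    rw [hji]
    exact hi1
  have hsum : (∑ m : ProjReps F 1, ∑ t : F, c (sMT m t) • ((sMT m t : ProjReps F (1+1)) : Fin (1+1) → F))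
      + c (sE 1) • ((sE 1 : ProjReps F (1+1)) : Fin (1+1) → F) = 0 := by
    rw [← sum_split 1 (fun u => c u • (u : Fin (1+1) → F)), ← finsum_eq_sum_of_fintype]
    exact hc
  rw [Fintype.sum_eq_single m₀ (fun x hx => absurd (hm₀ x) hx)] at hsum
  set A : F → F := fun t => c (sMT m₀ t) with hA
  have h0 : sg A = 0 := by
    have := congrFun hsum ((0 : Fin 1).castSucc)
    simp only [Pi.add_apply, Finset.sum_apply, Pi.smul_apply, smul_eq_mul,
      Pi.zero_apply, sMT_val, sE_val, eP, Fin.snoc_castSucc, hm0val] at this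
    rw [sg]
    simpa using this
  have h1 : st A + c (sE 1) = 0 := by
    have := congrFun hsum (Fin.last 1)
    simp only [Pi.add_apply, Finset.sum_apply, Pi.smul_apply, smul_eq_mul,
      Pi.zero_apply, sMT_val, sE_val, eP, Fin.snoc_last, hm0val, mul_one] at this
    rw [st]
    exact this
  have h2 : st A = 0 := F3_full hq3 A (fun t => hfull (sMT m₀ t)) h0
  rw [h2, zero_add] at h1
  exact hfull (sE 1) h1

end Tetra

/-- For a prime power `q > 2` and `r ≥ 2`: if `(q,r) ≠ (3,2)` then the weight set of
the `q`-ary Hamming code `H_r(q)` equals `{0} ∪ {3, 4, …, (q^r - 1)/(q - 1)}`, while in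
the exceptional case `(q,r) = (3,2)` the weight set of `H_2(3)` equals `{0, 3}`. -/
theorem stmt19 {F : Type*} [Field F] [Fintype F]
    (q : ℕ) (hq : q = Fintype.card F) (hq2 : 2 < q)
    (r : ℕ) (hr : 2 ≤ r) :
    (¬(q = 3 ∧ r = 2) →
      {w : ℕ | ∃ c ∈ HammingCode F r, hwt c = w}
        = {0} ∪ Set.Icc 3 ((q ^ r - 1) / (q - 1))) ∧
    ((q = 3 ∧ r = 2) →
      {w : ℕ | ∃ c ∈ HammingCode F r, hwt c = w} = {0, 3}) := by
  subst hq
  obtain ⟨s, rfl⟩ : ∃ s, r = s + 1 := ⟨r - 1, by omega⟩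
  have hs1 : 1 ≤ s := by omega
  constructor
  · intro hexc
    have hcard : ((Fintype.card F)^(s+1) - 1)/(Fintype.card F - 1)
        = Fintype.card (ProjReps F (s+1)) := card_div _ hq2
    ext w
    simp only [Set.mem_setOf_eq, Set.mem_union, Set.mem_singleton_iff, Set.mem_Icc]
    constructor
    · rintro ⟨c, hc, rfl⟩
      by_cases h0 : c = 0
      · left
        rw [h0, hwt_zero]
      · right
        exact ⟨minwt hc h0, by rw [hcard]; exact hwt_le c⟩
    · rintro (rfl | ⟨hw3, hwn⟩)
      · exact ⟨0, zero_mem_code _, hwt_zero⟩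
      · refine achieve s hq2 ?_ w hw3 ?_
        · intro h
          by_contra hcon
          push_neg at hcon
          exact hexc ⟨h, by omega⟩
        · rw [hcard, card_succ] at hwn
          exact hwn
  · rintro ⟨hq3, hr2⟩
    have hs : s = 1 := by omega
    subst hs
    ext w
    simp only [Set.mem_setOf_eq, Set.mem_insert_iff, Set.mem_singleton_iff]
    constructor
    · rintro ⟨c, hc, rfl⟩
      by_cases h0 : c = 0
      · left
        rw [h0, hwt_zero]
      · right
        have hlow := minwt hc h0
        have hhigh := hwt_le c
        rw [card_succ, card_p1, hq3] at hhigh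
        rcases Nat.lt_or_ge (hwt c) 4 with h | h
        · omega
        · exfalso
          exact tetra_no4 hq3 hc (by omega)
    · rintro (rfl | rfl)
      · exact ⟨0, zero_mem_code _, hwt_zero⟩
      · have h0m1 : (0 : F) ≠ -1 := by
          intro h
          exact one_ne_zero (α := F) (neg_eq_zero.mp h.symm)
        have h01 : (0 : F) ≠ 1 := zero_ne_one
        have h1m1 : (1 : F) ≠ -1 := F3_ne hq3
        obtain ⟨c, hc, hwtc⟩ := master (F := F) 1 [tri 0 1 (-1)]
          (by rw [card_p1]; simp)
          (fun g hg => by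
            rw [List.mem_singleton.mp hg]
            exact sg_tri h01 h0m1 h1m1)
        refine ⟨c, hc, ?_⟩
        rw [hwtc]
        simp only [List.map_cons, List.map_nil, List.sum_cons, List.sum_nil,
          sc_tri h01 h0m1 h1m1, st_tri h01 h0m1 h1m1, add_zero]
        rw [if_neg (show ¬((0:F) ≠ 0) by simp)]
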